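/- Let L₁, L₂, L₃, K₁, K₂, K₃ be the 4×4 real matrices acting on x = (x⁰,x¹,x²,x³) by L₁x = (0,0,−x³,x²), L₂x = (0,x³,0,−x¹), L₃x = (0,−x²,x¹,0), K₁x = (x¹,x⁰,0,0), K₂x = (x²,0,x⁰,0), K₃x = (x³,0,0,x⁰) (rotation and boost generators of so(1,3)). Set Q₁ := L₁ + K₂ and Q₂ := L₂ − K₁. Then: (i) for all τ ∈ ℝ, exp(τK₃)·L₁·exp(−τK₃) = cosh τ · L₁ + sinh τ · K₂ and exp(τK₃)·L₂·exp(−τK₃) = cosh τ · L₂ − sinh τ · K₁; (ii) lim_{τ→∞} 2e^{−τ}·exp(τK₃)·L_i·exp(−τK₃) = Q_i for i = 1,2 (limit in the space of 4×4 real matrices); (iii) Q₁·p₀ = Q₂·p₀ = L₃·p₀ = 0 for p₀ = (1,0,0,1); and (iv) [Q₁,Q₂] = 0, [L₃,Q₁] = Q₂, [L₃,Q₂] = −Q₁, i.e. Q₁, Q₂, L₃ span a Lie algebra with the commutation relations of the Euclidean group E(2). (The contraction of the massive little group SO(3) to the massless little group E(2) inside SO(1,3), Appendix A.) -/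

import Mathlib

noncomputable section

open Filter

open Matrix


private def K3e : Matrix (Fin 4) (Fin 4) ℝ := !![0,0,0,1;0,0,0,0;0,0,0,0;1,0,0,0]
private def Umat : Matrix (Fin 4) (Fin 4) ℝ := !![1,0,0,1;0,1,0,0;0,0,1,0;1,0,0,-1]
private def Vmat : Matrix (Fin 4) (Fin 4) ℝ := !![1/2,0,0,1/2;0,1,0,0;0,0,1,0;1/2,0,0,-1/2]

private lemma hUV : Umat * Vmat = 1 := by
  ext i j
  fin_cases i <;> fin_cases j <;>
    norm_num [Umat, Vmat, Matrix.mul_apply, Fin.sum_univ_four, Matrix.one_apply,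
      Matrix.vecHead, Matrix.vecTail, Matrix.cons_val_two, Matrix.cons_val_three, Fin.ext_iff]

private lemma hVU : Vmat * Umat = 1 := by
  ext i j
  fin_cases i <;> fin_cases j <;>
    norm_num [Umat, Vmat, Matrix.mul_apply, Fin.sum_univ_four, Matrix.one_apply,
      Matrix.vecHead, Matrix.vecTail, Matrix.cons_val_two, Matrix.cons_val_three, Fin.ext_iff]

private lemma diag_expl (a b c d : ℝ) :
    Matrix.diagonal ![a,b,c,d] = !![a,0,0,0;0,b,0,0;0,0,c,0;0,0,0,d] := by
  ext i j
  fin_cases i <;> fin_cases j <;>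
    simp [Matrix.diagonal_apply, Matrix.vecHead, Matrix.vecTail]

private lemma hconj (t : ℝ) : t • K3e = Umat * Matrix.diagonal ![t,0,0,-t] * Umat⁻¹ := by
  rw [Matrix.inv_eq_right_inv hUV, diag_expl]
  ext i j
  fin_cases i <;> fin_cases j <;>
    norm_num [Umat, Vmat, K3e, Matrix.mul_apply, Fin.sum_univ_four,
      Matrix.vecHead, Matrix.vecTail, Matrix.cons_val_two, Matrix.cons_val_three] <;> ring

private lemma expK3 (t : ℝ) : NormedSpace.exp (t • K3e) =
    !![Real.cosh t,0,0,Real.sinh t;0,1,0,0;0,0,1,0;Real.sinh t,0,0,Real.cosh t] := by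
  have hu : IsUnit Umat := ⟨⟨Umat, Vmat, hUV, hVU⟩, rfl⟩
  have hpi : NormedSpace.exp ![t,0,0,-t] = ![Real.exp t, 1, 1, Real.exp (-t)] := by
    funext i
    rw [Pi.exp_def]
    fin_cases i <;> simp [← Real.exp_eq_exp_ℝ, Real.exp_zero]
  rw [hconj, Matrix.exp_conj _ _ hu, Matrix.exp_diagonal, hpi, diag_expl,
    Matrix.inv_eq_right_inv hUV]
  ext i j
  fin_cases i <;> fin_cases j <;>
    norm_num [Umat, Vmat, Matrix.mul_apply, Fin.sum_univ_four,
      Matrix.vecHead, Matrix.vecTail, Matrix.cons_val_two, Matrix.cons_val_three, Real.cosh_eq, Real.sinh_eq] <;> ring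

set_option maxHeartbeats 1600000 in
/-- The contraction of the massive little group SO(3) to the massless little group E(2)
inside SO(1,3) (Appendix A). -/
theorem so3_contraction_to_e2
    (L₁ L₂ L₃ K₁ K₂ K₃ : Matrix (Fin 4) (Fin 4) ℝ)
    (hL₁ : ∀ x : Fin 4 → ℝ, L₁.mulVec x = ![0, 0, -x 3, x 2])
    (hL₂ : ∀ x : Fin 4 → ℝ, L₂.mulVec x = ![0, x 3, 0, -x 1])
    (hL₃ : ∀ x : Fin 4 → ℝ, L₃.mulVec x = ![0, -x 2, x 1, 0])
    (hK₁ : ∀ x : Fin 4 → ℝ, K₁.mulVec x = ![x 1, x 0, 0, 0])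
    (hK₂ : ∀ x : Fin 4 → ℝ, K₂.mulVec x = ![x 2, 0, x 0, 0])
    (hK₃ : ∀ x : Fin 4 → ℝ, K₃.mulVec x = ![x 3, 0, 0, x 0]) :
    -- (i) conjugation of the rotation generators by the boost exp(τK₃)
    (∀ τ : ℝ,
      NormedSpace.exp (τ • K₃) * L₁ * NormedSpace.exp ((-τ) • K₃) =
          Real.cosh τ • L₁ + Real.sinh τ • K₂ ∧
        NormedSpace.exp (τ • K₃) * L₂ * NormedSpace.exp ((-τ) • K₃) =
          Real.cosh τ • L₂ - Real.sinh τ • K₁) ∧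
    -- (ii) the contraction limits 2e^{−τ} exp(τK₃) L_i exp(−τK₃) → Q_i
    Tendsto
        (fun τ : ℝ =>
          (2 * Real.exp (-τ)) •
            (NormedSpace.exp (τ • K₃) * L₁ * NormedSpace.exp ((-τ) • K₃)))
        atTop (nhds (L₁ + K₂)) ∧
    Tendsto
        (fun τ : ℝ =>
          (2 * Real.exp (-τ)) •
            (NormedSpace.exp (τ • K₃) * L₂ * NormedSpace.exp ((-τ) • K₃)))
        atTop (nhds (L₂ - K₁)) ∧
    -- (iii) Q₁, Q₂, L₃ stabilize the reference vector p₀ = (1,0,0,1)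
    ((L₁ + K₂).mulVec ![1, 0, 0, 1] = 0 ∧ (L₂ - K₁).mulVec ![1, 0, 0, 1] = 0 ∧
      L₃.mulVec ![1, 0, 0, 1] = 0) ∧
    -- (iv) the E(2) commutation relations
    ((L₁ + K₂) * (L₂ - K₁) - (L₂ - K₁) * (L₁ + K₂) = 0 ∧
      L₃ * (L₁ + K₂) - (L₁ + K₂) * L₃ = L₂ - K₁ ∧
      L₃ * (L₂ - K₁) - (L₂ - K₁) * L₃ = -(L₁ + K₂)) := by
  -- extract explicit matrices
  have key : ∀ (M : Matrix (Fin 4) (Fin 4) ℝ) (i j : Fin 4),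
      M.mulVec (Pi.single j 1) i = M i j := by
    intro M i j; simp
  have eL₁ : L₁ = !![0,0,0,0;0,0,0,0;0,0,0,-1;0,0,1,0] := by
    ext i j; rw [← key L₁ i j, hL₁]
    fin_cases i <;> fin_cases j <;>
      simp [Pi.single_apply, Matrix.vecHead, Matrix.vecTail]
  have eL₂ : L₂ = !![0,0,0,0;0,0,0,1;0,0,0,0;0,-1,0,0] := by
    ext i j; rw [← key L₂ i j, hL₂]
    fin_cases i <;> fin_cases j <;>
      simp [Pi.single_apply, Matrix.vecHead, Matrix.vecTail]
  have eL₃ : L₃ = !![0,0,0,0;0,0,-1,0;0,1,0,0;0,0,0,0] := by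
    ext i j; rw [← key L₃ i j, hL₃]
    fin_cases i <;> fin_cases j <;>
      simp [Pi.single_apply, Matrix.vecHead, Matrix.vecTail]
  have eK₁ : K₁ = !![0,1,0,0;1,0,0,0;0,0,0,0;0,0,0,0] := by
    ext i j; rw [← key K₁ i j, hK₁]
    fin_cases i <;> fin_cases j <;>
      simp [Pi.single_apply, Matrix.vecHead, Matrix.vecTail]
  have eK₂ : K₂ = !![0,0,1,0;0,0,0,0;1,0,0,0;0,0,0,0] := by
    ext i j; rw [← key K₂ i j, hK₂]
    fin_cases i <;> fin_cases j <;>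
      simp [Pi.single_apply, Matrix.vecHead, Matrix.vecTail]
  have eK₃ : K₃ = K3e := by
    ext i j; rw [← key K₃ i j, hK₃]
    fin_cases i <;> fin_cases j <;>
      simp [K3e, Pi.single_apply, Matrix.vecHead, Matrix.vecTail]
  -- part (i)
  have part1 : ∀ τ : ℝ,
      NormedSpace.exp (τ • K₃) * L₁ * NormedSpace.exp ((-τ) • K₃) =
          Real.cosh τ • L₁ + Real.sinh τ • K₂ ∧
        NormedSpace.exp (τ • K₃) * L₂ * NormedSpace.exp ((-τ) • K₃) =
          Real.cosh τ • L₂ - Real.sinh τ • K₁ := by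
    intro τ
    rw [eK₃, expK3 τ, expK3 (-τ), eL₁, eL₂, eK₁, eK₂]
    constructor <;>
      (ext i j
       fin_cases i <;> fin_cases j <;>
         norm_num [Matrix.mul_apply, Fin.sum_univ_four, Matrix.vecHead, Matrix.vecTail, Matrix.cons_val_two, Matrix.cons_val_three,
           Real.cosh_neg, Real.sinh_neg] <;> ring)
  refine ⟨part1, ?_, ?_, ?_, ?_⟩
  · -- limit for L₁
    have e1 : ∀ τ : ℝ, Real.exp (-τ) * Real.exp τ = 1 := by
      intro τ; rw [← Real.exp_add]; simp
    have e2 : ∀ τ : ℝ, Real.exp (-τ) * Real.exp (-τ) = Real.exp (-(2*τ)) := by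
      intro τ; rw [← Real.exp_add]; ring_nf
    have hc : Tendsto (fun τ : ℝ => 2 * Real.exp (-τ) * Real.cosh τ) atTop (nhds 1) := by
      have heq : (fun τ : ℝ => 2 * Real.exp (-τ) * Real.cosh τ)
          = fun τ : ℝ => 1 + Real.exp (-(2*τ)) := by
        funext τ; rw [Real.cosh_eq]; linear_combination e1 τ + e2 τ
      rw [heq]
      have h0 : Tendsto (fun τ : ℝ => Real.exp (-(2*τ))) atTop (nhds 0) :=
        Real.tendsto_exp_neg_atTop_nhds_zero.comp
          (Filter.Tendsto.const_mul_atTop (by norm_num : (0:ℝ) < 2) tendsto_id)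
      simpa using tendsto_const_nhds.add h0
    have hs : Tendsto (fun τ : ℝ => 2 * Real.exp (-τ) * Real.sinh τ) atTop (nhds 1) := by
      have heq : (fun τ : ℝ => 2 * Real.exp (-τ) * Real.sinh τ)
          = fun τ : ℝ => 1 - Real.exp (-(2*τ)) := by
        funext τ; rw [Real.sinh_eq]; linear_combination e1 τ - e2 τ
      rw [heq]
      have h0 : Tendsto (fun τ : ℝ => Real.exp (-(2*τ))) atTop (nhds 0) :=
        Real.tendsto_exp_neg_atTop_nhds_zero.comp
          (Filter.Tendsto.const_mul_atTop (by norm_num : (0:ℝ) < 2) tendsto_id)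
      simpa using tendsto_const_nhds.sub h0
    have hfun : (fun τ : ℝ =>
        (2 * Real.exp (-τ)) •
          (NormedSpace.exp (τ • K₃) * L₁ * NormedSpace.exp ((-τ) • K₃)))
        = fun τ : ℝ => (2 * Real.exp (-τ) * Real.cosh τ) • L₁
            + (2 * Real.exp (-τ) * Real.sinh τ) • K₂ := by
      funext τ
      rw [(part1 τ).1, smul_add, smul_smul, smul_smul]
    rw [hfun]
    have := (hc.smul_const L₁).add (hs.smul_const K₂)
    simpa using this
  · -- limit for L₂
    have e1 : ∀ τ : ℝ, Real.exp (-τ) * Real.exp τ = 1 := by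
      intro τ; rw [← Real.exp_add]; simp
    have e2 : ∀ τ : ℝ, Real.exp (-τ) * Real.exp (-τ) = Real.exp (-(2*τ)) := by
      intro τ; rw [← Real.exp_add]; ring_nf
    have hc : Tendsto (fun τ : ℝ => 2 * Real.exp (-τ) * Real.cosh τ) atTop (nhds 1) := by
      have heq : (fun τ : ℝ => 2 * Real.exp (-τ) * Real.cosh τ)
          = fun τ : ℝ => 1 + Real.exp (-(2*τ)) := by
        funext τ; rw [Real.cosh_eq]; linear_combination e1 τ + e2 τ
      rw [heq]
      have h0 : Tendsto (fun τ : ℝ => Real.exp (-(2*τ))) atTop (nhds 0) :=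
        Real.tendsto_exp_neg_atTop_nhds_zero.comp
          (Filter.Tendsto.const_mul_atTop (by norm_num : (0:ℝ) < 2) tendsto_id)
      simpa using tendsto_const_nhds.add h0
    have hs : Tendsto (fun τ : ℝ => 2 * Real.exp (-τ) * Real.sinh τ) atTop (nhds 1) := by
      have heq : (fun τ : ℝ => 2 * Real.exp (-τ) * Real.sinh τ)
          = fun τ : ℝ => 1 - Real.exp (-(2*τ)) := by
        funext τ; rw [Real.sinh_eq]; linear_combination e1 τ - e2 τ
      rw [heq]
      have h0 : Tendsto (fun τ : ℝ => Real.exp (-(2*τ))) atTop (nhds 0) :=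
        Real.tendsto_exp_neg_atTop_nhds_zero.comp
          (Filter.Tendsto.const_mul_atTop (by norm_num : (0:ℝ) < 2) tendsto_id)
      simpa using tendsto_const_nhds.sub h0
    have hfun : (fun τ : ℝ =>
        (2 * Real.exp (-τ)) •
          (NormedSpace.exp (τ • K₃) * L₂ * NormedSpace.exp ((-τ) • K₃)))
        = fun τ : ℝ => (2 * Real.exp (-τ) * Real.cosh τ) • L₂
            - (2 * Real.exp (-τ) * Real.sinh τ) • K₁ := by
      funext τ
      rw [(part1 τ).2, smul_sub, smul_smul, smul_smul]
    rw [hfun]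
    have := (hc.smul_const L₂).sub (hs.smul_const K₁)
    simpa using this
  · refine ⟨?_, ?_, ?_⟩
    · rw [Matrix.add_mulVec, hL₁, hK₂]
      funext i; fin_cases i <;> simp [Matrix.vecHead, Matrix.vecTail]
    · rw [Matrix.sub_mulVec, hL₂, hK₁]
      funext i; fin_cases i <;> simp [Matrix.vecHead, Matrix.vecTail]
    · rw [hL₃]
      funext i; fin_cases i <;> simp [Matrix.vecHead, Matrix.vecTail]
  · rw [eL₁, eL₂, eL₃, eK₁, eK₂]
    refine ⟨?_, ?_, ?_⟩ <;>
      (ext i j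
       fin_cases i <;> fin_cases j <;>
         norm_num [Matrix.mul_apply, Fin.sum_univ_four, Matrix.vecHead, Matrix.vecTail, Matrix.cons_val_two, Matrix.cons_val_three])
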